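/- Let J' be an exponential random variable with rate ρ > 0, independent of a nonnegative random variable σ, and let λ > ρ. Then E[e^{λ (σ ∧ J')}] = (λ/(λ−ρ)) E[e^{(λ−ρ)σ}] − ρ/(λ−ρ), where both sides may be +∞ simultaneously. -/

import Mathlib

open Real MeasureTheory ProbabilityTheory ENNReal

private lemma exp_layercake {Ω : Type*} [MeasureSpace Ω]
    [IsProbabilityMeasure (volume : Measure Ω)]
    (X : Ω → ℝ) (hX : Measurable X) (hX0 : ∀ ω, 0 ≤ X ω) (c : ℝ) (hc : 0 < c) :
    ∫⁻ ω, ENNReal.ofReal (Real.exp (c * X ω)) =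
      1 + ∫⁻ t in Set.Ioi (0:ℝ),
        volume {a | t < X a} * ENNReal.ofReal (c * Real.exp (c * t)) := by
  have hint : ∀ x : ℝ, ∫ t in (0:ℝ)..x, c * Real.exp (c * t)
      = Real.exp (c * x) - 1 := by
    intro x
    have D : ∀ t ∈ Set.uIcc (0:ℝ) x, HasDerivAt (fun y => Real.exp (c * y))
        (c * Real.exp (c * t)) t := by
      intro t _
      simpa [mul_comm, Function.comp_def] using (Real.hasDerivAt_exp (c * t)).comp t
        ((hasDerivAt_id t).const_mul c)
    have := intervalIntegral.integral_eq_sub_of_hasDerivAt D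
      ((by fun_prop : Continuous fun t : ℝ => c * Real.exp (c * t)).intervalIntegrable 0 x)
    simpa using this
  have key := lintegral_comp_eq_lintegral_meas_lt_mul (volume : Measure Ω)
    (f := X) (g := fun t => c * Real.exp (c * t))
    (Filter.Eventually.of_forall hX0) hX.aemeasurable
    (fun t _ => (by fun_prop : Continuous fun t : ℝ => c * Real.exp (c * t)).intervalIntegrable 0 t)
    (Filter.Eventually.of_forall fun t => by positivity)
  have lhs_eq : ∫⁻ ω, ENNReal.ofReal (∫ t in (0:ℝ)..X ω, c * Real.exp (c * t))
      = ∫⁻ ω, (ENNReal.ofReal (Real.exp (c * X ω)) - 1) := by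
    refine lintegral_congr fun ω => ?_
    rw [hint (X ω), ENNReal.ofReal_sub _ zero_le_one, ENNReal.ofReal_one]
  rw [lhs_eq] at key
  have hone : ∀ ω : Ω, (1:ℝ≥0∞) ≤ ENNReal.ofReal (Real.exp (c * X ω)) := by
    intro ω
    rw [← ENNReal.ofReal_one]
    exact ENNReal.ofReal_le_ofReal (Real.one_le_exp (mul_nonneg hc.le (hX0 ω)))
  have hsub : ∫⁻ ω, (ENNReal.ofReal (Real.exp (c * X ω)) - 1)
      = (∫⁻ ω, ENNReal.ofReal (Real.exp (c * X ω))) - 1 := by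
    rw [lintegral_sub' (aemeasurable_const) (by simpa using (measure_ne_top volume Set.univ))
      (Filter.Eventually.of_forall hone)]
    simp
  rw [hsub] at key
  have hge : (1:ℝ≥0∞) ≤ ∫⁻ ω, ENNReal.ofReal (Real.exp (c * X ω)) := by
    calc (1:ℝ≥0∞) = ∫⁻ _ : Ω, 1 := by simp
    _ ≤ _ := lintegral_mono hone
  rw [← key, add_comm, tsub_add_cancel_of_le hge]

theorem stmt_11 {Ω : Type*} [MeasureSpace Ω] [IsProbabilityMeasure (volume : Measure Ω)]
    (σ J' : Ω → ℝ) (hσmeas : Measurable σ) (hJmeas : Measurable J')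
    (hσ0 : ∀ ω, 0 ≤ σ ω) (hJ0 : ∀ ω, 0 ≤ J' ω)
    (ρ lam : ℝ) (hρ : 0 < ρ) (hlam : ρ < lam)
    (hindep : IndepFun σ J' volume)
    (hexp : ∀ t : ℝ, 0 ≤ t → volume {ω | t < J' ω} = ENNReal.ofReal (Real.exp (-ρ * t))) :
    ∫⁻ ω, ENNReal.ofReal (Real.exp (lam * min (σ ω) (J' ω))) =
      ENNReal.ofReal (lam / (lam - ρ)) *
          (∫⁻ ω, ENNReal.ofReal (Real.exp ((lam - ρ) * σ ω))) -
        ENNReal.ofReal (ρ / (lam - ρ)) := by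
  have hd : (0:ℝ) < lam - ρ := by linarith
  have hlam0 : (0:ℝ) < lam := hρ.trans hlam
  set A : ℝ≥0∞ := ∫⁻ t in Set.Ioi (0:ℝ),
      volume {a | t < σ a} * ENNReal.ofReal (Real.exp ((lam - ρ) * t)) with hA
  -- LHS via layer cake for min
  have hmin : ∫⁻ ω, ENNReal.ofReal (Real.exp (lam * min (σ ω) (J' ω)))
      = 1 + ENNReal.ofReal lam * A := by
    rw [exp_layercake (fun ω => min (σ ω) (J' ω)) (hσmeas.min hJmeas)
      (fun ω => le_min (hσ0 ω) (hJ0 ω)) lam hlam0]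
    congr 1
    rw [hA, ← lintegral_const_mul' _ _ ENNReal.ofReal_ne_top]
    refine setLIntegral_congr_fun measurableSet_Ioi
      (fun t ht => ?_)
    have hset : {a : Ω | t < min (σ a) (J' a)} = σ ⁻¹' Set.Ioi t ∩ J' ⁻¹' Set.Ioi t := by
      ext a; simp [lt_min_iff, Set.mem_preimage]
    have hmul := hindep.measure_inter_preimage_eq_mul (Set.Ioi t) (Set.Ioi t)
      measurableSet_Ioi measurableSet_Ioi
    have hJ : volume (J' ⁻¹' Set.Ioi t) = ENNReal.ofReal (Real.exp (-ρ * t)) := by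
      have := hexp t (le_of_lt ht)
      simpa [Set.preimage, Set.mem_Ioi] using this
    rw [hset, hmul, hJ]
    have hσset : σ ⁻¹' Set.Ioi t = {a | t < σ a} := rfl
    rw [hσset]
    have harg : (lam - ρ) * t = -ρ * t + lam * t := by ring
    have he : ENNReal.ofReal (Real.exp (-ρ * t)) * ENNReal.ofReal (lam * Real.exp (lam * t))
        = ENNReal.ofReal lam * ENNReal.ofReal (Real.exp ((lam - ρ) * t)) := by
      rw [← ENNReal.ofReal_mul (Real.exp_nonneg _), ← ENNReal.ofReal_mul hlam0.le]
      congr 1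
      rw [harg, Real.exp_add]
      ring
    rw [mul_assoc, he]
    ring
  -- RHS inner integral via layer cake for σ
  have hσint : ∫⁻ ω, ENNReal.ofReal (Real.exp ((lam - ρ) * σ ω))
      = 1 + ENNReal.ofReal (lam - ρ) * A := by
    rw [exp_layercake σ hσmeas hσ0 (lam - ρ) hd]
    congr 1
    rw [hA, ← lintegral_const_mul' _ _ ENNReal.ofReal_ne_top]
    refine setLIntegral_congr_fun measurableSet_Ioi
      (fun t _ => ?_)
    rw [ENNReal.ofReal_mul hd.le]
    ring
  rw [hmin, hσint]
  -- algebra in ℝ≥0∞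
  have h1 : ENNReal.ofReal (lam / (lam - ρ)) = 1 + ENNReal.ofReal (ρ / (lam - ρ)) := by
    rw [← ENNReal.ofReal_one, ← ENNReal.ofReal_add zero_le_one (by positivity)]
    congr 1
    field_simp
    ring
  have h2 : ENNReal.ofReal (lam / (lam - ρ)) * ENNReal.ofReal (lam - ρ)
      = ENNReal.ofReal lam := by
    rw [← ENNReal.ofReal_mul (by positivity)]
    congr 1
    field_simp
  rw [mul_add, mul_one, ← mul_assoc, h2, h1]
  rw [show (1 : ℝ≥0∞) + ENNReal.ofReal (ρ / (lam - ρ)) + ENNReal.ofReal lam * A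
      = (1 + ENNReal.ofReal lam * A) + ENNReal.ofReal (ρ / (lam - ρ)) by ring]
  rw [ENNReal.add_sub_cancel_right ENNReal.ofReal_ne_top]
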